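/- Let p ∈ (0,1), let K be a p-core CRG, and let x be a nonnegative weight vector summing to 1 attaining the minimum g_K(p). If p ≤ 1/2, then x(v) = g_K(p)/p for every white vertex v, and d_G(v) = (p − g_K(p))/p + ((1−2p)/p)·x(v) for every black vertex v. If p ≥ 1/2, then x(v) = g_K(p)/(1−p) for every black vertex v, and d_G(v) = (1 − p − g_K(p))/(1−p) + ((2p−1)/(1−p))·x(v) for every white vertex v. -/

import Mathlib

/-- Colors for edges of a colored regularity graph. -/
inductive EColor : Type
  | white
  | gray
  | black
deriving DecidableEq

/-- A colored regularity graph (CRG) on a finite vertex type `V`: each vertex is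
white or black (`vWhite v = true` means white), and each pair of distinct vertices
gets a symmetric edge color (white, gray or black). -/
structure CRG (V : Type) [Fintype V] where
  vWhite : V → Bool
  ecolor : V → V → EColor
  ecolor_symm : ∀ u v, ecolor u v = ecolor v u

namespace CRG

variable {V : Type} [Fintype V] [DecidableEq V]

/-- The matrix `M_K(p)`. -/
noncomputable def M (K : CRG V) (p : ℝ) (u v : V) : ℝ :=
  if u = v then (if K.vWhite u then p else 1 - p)
  else
    match K.ecolor u v with
    | EColor.white => p
    | EColor.black => 1 - p
    | EColor.gray => 0

/-- The function `g_K(p)`: the minimum of `xᵀ M_K(p) x` over nonnegative weight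
vectors summing to `1`. -/
noncomputable def g (K : CRG V) (p : ℝ) : ℝ :=
  sInf {r : ℝ | ∃ x : V → ℝ, (∀ v, 0 ≤ x v) ∧ (∑ v, x v) = 1 ∧
    r = ∑ u, ∑ v, x u * K.M p u v * x v}

/-- The sub-CRG induced on a subset `s` of the vertices. -/
def sub (K : CRG V) (s : Finset V) : CRG {v // v ∈ s} where
  vWhite := fun v => K.vWhite v.1
  ecolor := fun u v => K.ecolor u.1 v.1
  ecolor_symm := fun u v => K.ecolor_symm u.1 v.1

/-- `K` is `p`-core if `g_K(p) < g_{K'}(p)` for every proper (nonempty) sub-CRG `K'`. -/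
def IsPCore (K : CRG V) (p : ℝ) : Prop :=
  ∀ s : Finset V, s.Nonempty → s ≠ Finset.univ → K.g p < (K.sub s).g p

/-- `x` is an optimal weight vector for `K` at `p`. -/
def IsOptWeight (K : CRG V) (p : ℝ) (x : V → ℝ) : Prop :=
  (∀ v, 0 ≤ x v) ∧ (∑ v, x v) = 1 ∧
    (∑ u, ∑ v, x u * K.M p u v * x v) = K.g p

/-- The gray degree `d_G(v)`: total weight of gray neighbors of `v`. -/
noncomputable def dG (K : CRG V) (x : V → ℝ) (v : V) : ℝ :=
  ∑ w ∈ Finset.univ.filter fun w => w ≠ v ∧ K.ecolor v w = EColor.gray, x w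

/-- The white degree `d_W(v)`: total weight of white neighbors of `v`, including `v`
itself if `v` is white. -/
noncomputable def dW (K : CRG V) (x : V → ℝ) (v : V) : ℝ :=
  (∑ w ∈ Finset.univ.filter fun w => w ≠ v ∧ K.ecolor v w = EColor.white, x w) +
    (if K.vWhite v then x v else 0)

/-- The black degree `d_B(v)`: total weight of black neighbors of `v`, including `v`
itself if `v` is black. -/
noncomputable def dB (K : CRG V) (x : V → ℝ) (v : V) : ℝ :=
  (∑ w ∈ Finset.univ.filter fun w => w ≠ v ∧ K.ecolor v w = EColor.black, x w) +
    (if K.vWhite v then 0 else x v)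

/-- The number of gray neighbors of `v`. -/
def grayDeg (K : CRG V) (v : V) : ℕ :=
  (Finset.univ.filter fun w => w ≠ v ∧ K.ecolor v w = EColor.gray).card

end CRG

/-- A graph `H` embeds in a CRG `K`, written `H ↦ K`. -/
def EmbedsIn {α : Type*} {V : Type} [Fintype V] (H : SimpleGraph α) (K : CRG V) : Prop :=
  ∃ φ : α → V,
    (∀ a b : α, H.Adj a b →
      (φ a = φ b ∧ K.vWhite (φ a) = false) ∨
      (φ a ≠ φ b ∧ (K.ecolor (φ a) (φ b) = EColor.black ∨ K.ecolor (φ a) (φ b) = EColor.gray))) ∧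
    (∀ a b : α, a ≠ b → ¬H.Adj a b →
      (φ a = φ b ∧ K.vWhite (φ a) = true) ∨
      (φ a ≠ φ b ∧ (K.ecolor (φ a) (φ b) = EColor.white ∨ K.ecolor (φ a) (φ b) = EColor.gray)))

section AuxDev

open Finset

variable {V : Type} [Fintype V] [DecidableEq V]

lemma M_symm (K : CRG V) (p : ℝ) (u v : V) : K.M p u v = K.M p v u := by
  unfold CRG.M
  by_cases h : u = v
  · subst h; rfl
  · rw [if_neg h, if_neg (Ne.symm h), K.ecolor_symm]

lemma M_white (K : CRG V) (p : ℝ) {u v : V} (h : u ≠ v)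
    (hc : K.ecolor u v = EColor.white) : K.M p u v = p := by
  simp [CRG.M, if_neg h, hc]

lemma M_gray (K : CRG V) (p : ℝ) {u v : V} (h : u ≠ v)
    (hc : K.ecolor u v = EColor.gray) : K.M p u v = 0 := by
  simp [CRG.M, if_neg h, hc]

lemma M_black (K : CRG V) (p : ℝ) {u v : V} (h : u ≠ v)
    (hc : K.ecolor u v = EColor.black) : K.M p u v = 1 - p := by
  simp [CRG.M, if_neg h, hc]

lemma M_nonneg (K : CRG V) {p : ℝ} (hp0 : 0 ≤ p) (hp1 : p ≤ 1) (u v : V) :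
    0 ≤ K.M p u v := by
  unfold CRG.M
  by_cases h : u = v
  · rw [if_pos h]; split <;> linarith
  · rw [if_neg h]
    rcases hc : K.ecolor u v <;> simp [hc] <;> linarith

/-- Quadratic/bilinear form. -/
noncomputable def BB (K : CRG V) (p : ℝ) (a b : V → ℝ) : ℝ :=
  ∑ u, ∑ v, a u * K.M p u v * b v

/-- Row sums of `M x`. -/
noncomputable def RR (K : CRG V) (p : ℝ) (x : V → ℝ) (v : V) : ℝ :=
  ∑ w, K.M p v w * x w

lemma BB_symm (K : CRG V) (p : ℝ) (a b : V → ℝ) : BB K p a b = BB K p b a := by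
  unfold BB
  rw [Finset.sum_comm]
  refine Finset.sum_congr rfl fun u _ => Finset.sum_congr rfl fun v _ => ?_
  rw [M_symm]; ring

lemma BB_eq_sum_RR (K : CRG V) (p : ℝ) (a x : V → ℝ) :
    BB K p a x = ∑ v, a v * RR K p x v := by
  unfold BB RR
  refine Finset.sum_congr rfl fun u _ => ?_
  rw [Finset.mul_sum]
  exact Finset.sum_congr rfl fun v _ => by ring

lemma BB_expand (K : CRG V) (p : ℝ) (x d : V → ℝ) (t : ℝ) :
    BB K p (fun v => x v + t * d v) (fun v => x v + t * d v)
      = BB K p x x + 2 * t * BB K p d x + t ^ 2 * BB K p d d := by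
  have h1 : BB K p x d = BB K p d x := BB_symm K p x d
  have key : BB K p (fun v => x v + t * d v) (fun v => x v + t * d v)
      = BB K p x x + t * BB K p x d + t * BB K p d x + t ^ 2 * BB K p d d := by
    unfold BB
    simp only [Finset.mul_sum, ← Finset.sum_add_distrib]
    exact Finset.sum_congr rfl fun u _ => Finset.sum_congr rfl fun v _ => by ring
  rw [key, h1]; ring

lemma g_le_val (K : CRG V) {p : ℝ} (hp0 : 0 ≤ p) (hp1 : p ≤ 1) (y : V → ℝ)
    (h0 : ∀ v, 0 ≤ y v) (h1 : (∑ v, y v) = 1) : K.g p ≤ BB K p y y := by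
  apply csInf_le
  · refine ⟨0, fun r hr => ?_⟩
    obtain ⟨z, hz0, _, rfl⟩ := hr
    apply Finset.sum_nonneg; intro u _
    apply Finset.sum_nonneg; intro v _
    have h1 := M_nonneg K hp0 hp1 u v
    have h2 := hz0 u; have h3 := hz0 v
    positivity
  · exact ⟨y, h0, h1, rfl⟩

lemma M_sub (K : CRG V) (p : ℝ) (s : Finset V) (u v : {v // v ∈ s}) :
    (K.sub s).M p u v = K.M p u.1 v.1 := by
  unfold CRG.M
  by_cases h : u = v
  · rw [if_pos h, if_pos (show u.1 = v.1 by rw [h])]; rfl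
  · rw [if_neg h, if_neg (fun hh => h (Subtype.ext hh))]; rfl

section Opt

variable {p : ℝ} {K : CRG V} {x : V → ℝ}

lemma opt_val (hx : K.IsOptWeight p x) : BB K p x x = K.g p := hx.2.2

lemma shift_lb (hp : p ∈ Set.Ioo (0:ℝ) 1) (hx : K.IsOptWeight p x) (t : ℝ) (d : V → ℝ)
    (hge : ∀ v, 0 ≤ x v + t * d v) (hd : (∑ v, d v) = 0) :
    0 ≤ 2 * t * BB K p d x + t ^ 2 * BB K p d d := by
  have hs : (∑ v, (x v + t * d v)) = 1 := by
    rw [Finset.sum_add_distrib, hx.2.1, ← Finset.mul_sum, hd]; ring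
  have h := g_le_val K hp.1.le hp.2.le _ hge hs
  rw [BB_expand, opt_val hx] at h
  linarith

lemma no_zero_opt (hp : p ∈ Set.Ioo (0:ℝ) 1) (hcore : K.IsPCore p)
    (y : V → ℝ) (h0 : ∀ v, 0 ≤ y v) (h1 : (∑ v, y v) = 1)
    (hval : BB K p y y = K.g p) (v₀ : V) (hv0 : y v₀ = 0) : False := by
  set s : Finset V := Finset.univ.erase v₀ with hs
  have hsne : s.Nonempty := by
    obtain ⟨w, _, hw⟩ := Finset.exists_ne_zero_of_sum_ne_zero (by rw [h1]; norm_num :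
      (∑ v, y v) ≠ 0)
    exact ⟨w, Finset.mem_erase.mpr ⟨fun hh => hw (hh ▸ hv0), Finset.mem_univ w⟩⟩
  have hsnu : s ≠ Finset.univ := fun h => by
    have := h ▸ Finset.mem_univ v₀
    exact (Finset.mem_erase.mp this).1 rfl
  have hlt := hcore s hsne hsnu
  -- the restricted weight has value `g`, so `(K.sub s).g p ≤ K.g p`
  have hsum_s : (∑ w ∈ s, y w) = 1 := by
    rw [hs, Finset.sum_erase _ hv0, h1]
  have hz : BB (K.sub s) p (fun w => y w.1) (fun w => y w.1) = BB K p y y := by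
    unfold BB
    have e1 : ∀ u : {v // v ∈ s},
        (∑ v : {v // v ∈ s}, y u.1 * (K.sub s).M p u v * y v.1)
          = ∑ v ∈ s, y u.1 * K.M p u.1 v * y v := by
      intro u
      rw [← Finset.sum_coe_sort s (fun v => y u.1 * K.M p u.1 v * y v)]
      exact Finset.sum_congr rfl fun v _ => by rw [M_sub]
    calc (∑ u : {v // v ∈ s}, ∑ v : {v // v ∈ s}, y u.1 * (K.sub s).M p u v * y v.1)
        = ∑ u : {v // v ∈ s}, ∑ v ∈ s, y u.1 * K.M p u.1 v * y v :=
          Finset.sum_congr rfl fun u _ => e1 u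
      _ = ∑ u ∈ s, ∑ v ∈ s, y u * K.M p u v * y v :=
          Finset.sum_coe_sort s (fun u => ∑ v ∈ s, y u * K.M p u v * y v)
      _ = ∑ u ∈ s, ∑ v : V, y u * K.M p u v * y v := by
          refine Finset.sum_congr rfl fun u _ => ?_
          rw [hs]
          exact Finset.sum_erase _ (by rw [hv0]; ring)
      _ = ∑ u : V, ∑ v : V, y u * K.M p u v * y v := by
          rw [hs]
          exact Finset.sum_erase _ (by simp [hv0])
  have hle : (K.sub s).g p ≤ K.g p := by
    have := g_le_val (K.sub s) hp.1.le hp.2.le (fun w => y w.1)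
      (fun w => h0 w.1) (by rw [Finset.sum_coe_sort s (fun w => y w)]; exact hsum_s)
    rw [hz, hval] at this
    exact this
  linarith

lemma x_pos (hp : p ∈ Set.Ioo (0:ℝ) 1) (hcore : K.IsPCore p)
    (hx : K.IsOptWeight p x) (v : V) : 0 < x v := by
  rcases (hx.1 v).lt_or_eq with h | h
  · exact h
  · exact (no_zero_opt hp hcore x hx.1 hx.2.1 (opt_val hx) v h.symm).elim

lemma RR_eq_g (hp : p ∈ Set.Ioo (0:ℝ) 1) (hcore : K.IsPCore p)
    (hx : K.IsOptWeight p x) (v : V) : RR K p x v = K.g p := by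
  have hle : ∀ u w : V, RR K p x u ≤ RR K p x w := by
    intro u w
    by_cases huw : u = w
    · rw [huw]
    by_contra hcon
    push_neg at hcon
    set b : ℝ := RR K p x w - RR K p x u with hb
    have hbneg : b < 0 := by rw [hb]; linarith
    set d : V → ℝ := fun z => (if z = w then (1:ℝ) else 0) - (if z = u then 1 else 0) with hdd
    have hdsum : (∑ z, d z) = 0 := by
      simp [hdd, Finset.sum_sub_distrib]
    have hBdx : BB K p d x = b := by
      rw [BB_eq_sum_RR, hb]
      simp only [hdd, sub_mul, ite_mul, one_mul, zero_mul, Finset.sum_sub_distrib,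
        Finset.sum_ite_eq', Finset.mem_univ, if_true]
    set q : ℝ := BB K p d d with hq
    set t : ℝ := min (x u) (-b / (|q| + 1)) with ht
    have htpos : 0 < t := by
      apply lt_min (x_pos hp hcore hx u)
      apply div_pos (by linarith) (by positivity)
    have hge : ∀ z, 0 ≤ x z + t * d z := by
      intro z
      by_cases hzw : z = w
      · have hwu : w ≠ u := fun h => huw h.symm
        have hd1 : d z = 1 := by simp [hdd, hzw, hwu]
        rw [hd1]
        have := (x_pos hp hcore hx z).le
        linarith
      · by_cases hzu : z = u
        · subst hzu
          have hd1 : d z = -1 := by simp [hdd, if_neg hzw]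
          rw [hd1]
          have : t ≤ x z := min_le_left _ _
          linarith
        · have hd1 : d z = 0 := by simp [hdd, if_neg hzw, if_neg hzu]
          rw [hd1]
          have := (hx.1 z)
          linarith
    have hineq := shift_lb hp hx t d hge hdsum
    rw [hBdx] at hineq
    have ht2 : t ≤ -b / (|q| + 1) := min_le_right _ _
    have ht3 : t * (|q| + 1) ≤ -b := by
      rw [← le_div_iff₀ (by positivity : (0:ℝ) < |q| + 1)]
      exact ht2
    have hqabs : q ≤ |q| := le_abs_self q
    nlinarith [mul_pos htpos htpos, mul_le_mul_of_nonneg_left ht3 htpos.le]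
  have hall : ∀ u : V, RR K p x u = RR K p x v := fun u =>
    le_antisymm (hle u v) (hle v u)
  have hg : K.g p = ∑ w, x w * RR K p x w := by
    rw [← BB_eq_sum_RR, opt_val hx]
  have hfin : (∑ w, x w * RR K p x w) = RR K p x v := calc
    (∑ w, x w * RR K p x w) = ∑ w, x w * RR K p x v :=
        Finset.sum_congr rfl fun w _ => by rw [hall w]
    _ = (∑ w, x w) * RR K p x v := by rw [Finset.sum_mul]
    _ = RR K p x v := by rw [hx.2.1, one_mul]
  rw [hg, hfin]

lemma BB_dx_zero (hp : p ∈ Set.Ioo (0:ℝ) 1) (hcore : K.IsPCore p)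
    (hx : K.IsOptWeight p x) (d : V → ℝ) (hd : (∑ v, d v) = 0) :
    BB K p d x = 0 := by
  rw [BB_eq_sum_RR]
  calc (∑ v, d v * RR K p x v) = ∑ v, d v * K.g p :=
        Finset.sum_congr rfl fun v _ => by rw [RR_eq_g hp hcore hx]
    _ = (∑ v, d v) * K.g p := by rw [← Finset.sum_mul]
    _ = 0 := by rw [hd, zero_mul]

lemma PD [Nonempty V] (hp : p ∈ Set.Ioo (0:ℝ) 1) (hcore : K.IsPCore p)
    (hx : K.IsOptWeight p x) (d : V → ℝ) (hd : (∑ v, d v) = 0) (hdne : d ≠ 0) :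
    0 < BB K p d d := by
  have hzero := BB_dx_zero hp hcore hx d hd
  have habs : ∃ t : ℝ, 0 < t ∧ ∀ v, 0 ≤ x v + t * d v := by
    set m := Finset.univ.inf' Finset.univ_nonempty x with hm'
    have hm : 0 < m := (Finset.lt_inf'_iff _).mpr fun v _ => x_pos hp hcore hx v
    set c := Finset.univ.sup' Finset.univ_nonempty (fun v => |d v|) with hc'
    have hc : 0 ≤ c :=
      le_trans (abs_nonneg (d (Classical.arbitrary V)))
        (Finset.le_sup' (fun v => |d v|) (Finset.mem_univ (Classical.arbitrary V)))
    refine ⟨m / (c + 1), by positivity, fun v => ?_⟩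
    have h1 : m ≤ x v := Finset.inf'_le _ (Finset.mem_univ v)
    have h2 : |d v| ≤ c := Finset.le_sup' (fun w => |d w|) (Finset.mem_univ v)
    have h4 : (m / (c+1)) * (-|d v|) ≤ (m / (c+1)) * d v :=
      mul_le_mul_of_nonneg_left (neg_abs_le (d v)) (by positivity)
    have h5 : m / (c + 1) * |d v| ≤ m / (c+1) * c :=
      mul_le_mul_of_nonneg_left h2 (by positivity)
    have h6 : m / (c + 1) * (c + 1) = m := by field_simp
    nlinarith
  obtain ⟨t, ht0, hge⟩ := habs
  have h1 := shift_lb hp hx t d hge hd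
  rw [hzero] at h1
  have hq0 : 0 ≤ BB K p d d := by
    have ht2 : 0 < t ^ 2 := by positivity
    nlinarith
  rcases hq0.lt_or_eq with h | h
  · exact h
  · exfalso
    have hvneg : ∃ v, d v < 0 := by
      by_contra hcon; push_neg at hcon
      have hz : ∀ v ∈ Finset.univ, d v = 0 :=
        (Finset.sum_eq_zero_iff_of_nonneg (fun v _ => hcon v)).mp hd
      exact hdne (funext fun v => hz v (Finset.mem_univ v))
    obtain ⟨w, hw⟩ := hvneg
    set T := Finset.univ.filter (fun v => d v < 0) with hT
    have hTne : T.Nonempty := ⟨w, Finset.mem_filter.mpr ⟨Finset.mem_univ w, hw⟩⟩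
    set I := T.image (fun v => x v / (-(d v))) with hI
    have hIne : I.Nonempty := hTne.image _
    set t0 := I.min' hIne with ht0'
    obtain ⟨v₀, hv₀T, hv₀⟩ := Finset.mem_image.mp (I.min'_mem hIne)
    have hv₀neg : d v₀ < 0 := (Finset.mem_filter.mp hv₀T).2
    have ht0pos : 0 < t0 := by
      rw [ht0', ← hv₀]; exact div_pos (x_pos hp hcore hx v₀) (by linarith)
    have hge0 : ∀ v, 0 ≤ x v + t0 * d v := by
      intro v
      by_cases hv : d v < 0
      · have hmem : x v / (-(d v)) ∈ I :=
          Finset.mem_image_of_mem _ (Finset.mem_filter.mpr ⟨Finset.mem_univ v, hv⟩)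
        have hle := I.min'_le _ hmem
        have h2 : t0 * (-(d v)) ≤ x v := by
          rw [← le_div_iff₀ (by linarith : (0:ℝ) < -(d v))]
          exact le_trans (le_refl t0) hle
        linarith
      · push_neg at hv
        have := mul_nonneg ht0pos.le hv
        have := hx.1 v
        linarith
    have hsum0 : (∑ v, (x v + t0 * d v)) = 1 := by
      rw [Finset.sum_add_distrib, hx.2.1, ← Finset.mul_sum, hd]; ring
    have hval : BB K p (fun v => x v + t0 * d v) (fun v => x v + t0 * d v) = K.g p := by
      rw [BB_expand, opt_val hx, hzero, ← h]; ring
    have hdv0 : d v₀ ≠ 0 := ne_of_lt hv₀neg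
    have hy0 : x v₀ + t0 * d v₀ = 0 := by
      rw [ht0', ← hv₀]
      field_simp
      ring
    exact no_zero_opt hp hcore _ hge0 hsum0 hval v₀ hy0

end Opt

end AuxDev
section Struct

open Finset

variable {V : Type} [Fintype V] [DecidableEq V]

lemma M_diag (K : CRG V) (p : ℝ) (u : V) :
    K.M p u u = if K.vWhite u then p else 1 - p := by simp [CRG.M]

lemma BB_sub_left (K : CRG V) (p : ℝ) (a b c : V → ℝ) :
    BB K p (fun v => a v - b v) c = BB K p a c - BB K p b c := by
  unfold BB
  simp only [sub_mul, Finset.sum_sub_distrib]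

lemma BB_sub_right (K : CRG V) (p : ℝ) (a b c : V → ℝ) :
    BB K p c (fun v => a v - b v) = BB K p c a - BB K p c b := by
  rw [BB_symm, BB_sub_left, BB_symm K p a c, BB_symm K p b c]

lemma BB_ind_left (K : CRG V) (p : ℝ) (S : ℝ) (u : V) (b : V → ℝ) :
    BB K p (fun z => if z = u then S else 0) b = S * ∑ w, K.M p u w * b w := by
  unfold BB
  rw [Finset.sum_eq_single u (fun z _ hz => by simp [hz])
    (fun h => absurd (Finset.mem_univ u) h)]
  rw [Finset.mul_sum]
  exact Finset.sum_congr rfl fun w _ => by simp [mul_assoc]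

lemma BB_pair (K : CRG V) (p : ℝ) {u v : V} (h : u ≠ v) :
    BB K p (fun w => (if w = u then (1:ℝ) else 0) - (if w = v then 1 else 0))
      (fun w => (if w = u then (1:ℝ) else 0) - (if w = v then 1 else 0))
      = K.M p u u + K.M p v v - 2 * K.M p u v := by
  rw [BB_sub_left, BB_sub_right, BB_sub_right, BB_ind_left, BB_ind_left,
    BB_ind_left, BB_ind_left]
  have e1 : ∀ (z : V), (∑ w, K.M p z w * (if w = u then (1:ℝ) else 0)) = K.M p z u := by
    intro z; simp [mul_ite, mul_one, mul_zero, Finset.sum_ite_eq']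
  have e2 : ∀ (z : V), (∑ w, K.M p z w * (if w = v then (1:ℝ) else 0)) = K.M p z v := by
    intro z; simp [mul_ite, mul_one, mul_zero, Finset.sum_ite_eq']
  rw [e1 u, e1 v, e2 u, e2 v, M_symm K p v u]
  ring

lemma BB_N (K : CRG V) (p : ℝ) (N : Finset V) (x : V → ℝ) :
    BB K p (fun z => if z ∈ N then x z else 0) (fun z => if z ∈ N then x z else 0)
      = ∑ z ∈ N, ∑ w ∈ N, x z * K.M p z w * x w := by
  unfold BB
  rw [← Finset.sum_subset (Finset.subset_univ N) (fun z _ hz => by simp [hz])]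
  refine Finset.sum_congr rfl fun z hz => ?_
  rw [← Finset.sum_subset (Finset.subset_univ N) (fun w _ hw => by simp [hw])]
  exact Finset.sum_congr rfl fun w hw => by simp [hz, hw]

lemma RR_split (K : CRG V) (p : ℝ) (x : V → ℝ) (u : V) :
    RR K p x u = K.M p u u * x u + ∑ w ∈ Finset.univ.erase u, K.M p u w * x w :=
  (Finset.add_sum_erase _ _ (Finset.mem_univ u)).symm

variable {p : ℝ} {K : CRG V} {x : V → ℝ} [Nonempty V]

lemma no_black (hp : p ∈ Set.Ioo (0:ℝ) 1) (hp2 : p ≤ 1/2) (hcore : K.IsPCore p)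
    (hx : K.IsOptWeight p x) {u v : V} (huv : u ≠ v) :
    K.ecolor u v ≠ EColor.black := by
  intro hc
  have hd : (∑ w, ((if w = u then (1:ℝ) else 0) - (if w = v then 1 else 0))) = 0 := by
    simp [Finset.sum_sub_distrib]
  have hdne : (fun w => (if w = u then (1:ℝ) else 0) - (if w = v then 1 else 0)) ≠ 0 := by
    intro h0
    have h2 := congrFun h0 u
    simp [huv] at h2
  have hq := PD hp hcore hx _ hd hdne
  rw [BB_pair K p huv, M_black K p huv hc, M_diag, M_diag] at hq
  rcases hu : K.vWhite u <;> rcases hv : K.vWhite v <;>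
    rw [hu, hv] at hq <;> simp at hq <;> try linarith

lemma no_ww_white (hp : p ∈ Set.Ioo (0:ℝ) 1) (hcore : K.IsPCore p)
    (hx : K.IsOptWeight p x) {u v : V} (huv : u ≠ v)
    (hu : K.vWhite u = true) (hv : K.vWhite v = true) :
    K.ecolor u v ≠ EColor.white := by
  intro hc
  have hd : (∑ w, ((if w = u then (1:ℝ) else 0) - (if w = v then 1 else 0))) = 0 := by
    simp [Finset.sum_sub_distrib]
  have hdne : (fun w => (if w = u then (1:ℝ) else 0) - (if w = v then 1 else 0)) ≠ 0 := by
    intro h0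
    have h2 := congrFun h0 u
    simp [huv] at h2
  have hq := PD hp hcore hx _ hd hdne
  rw [BB_pair K p huv, M_white K p huv hc, M_diag, M_diag, hu, hv] at hq
  simp at hq
  linarith

lemma no_white_at_white (hp : p ∈ Set.Ioo (0:ℝ) 1) (hp2 : p ≤ 1/2)
    (hcore : K.IsPCore p) (hx : K.IsOptWeight p x) {u : V}
    (hu : K.vWhite u = true) : ∀ w, w ≠ u → K.ecolor u w ≠ EColor.white := by
  intro w₀ hw₀ne hw₀c
  set N := Finset.univ.filter (fun t => t ≠ u ∧ K.ecolor u t = EColor.white) with hN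
  have hmemN : ∀ t, t ∈ N ↔ (t ≠ u ∧ K.ecolor u t = EColor.white) := by
    intro t; simp [hN]
  have hwN : w₀ ∈ N := (hmemN w₀).mpr ⟨hw₀ne, hw₀c⟩
  have huN : u ∉ N := fun h => ((hmemN u).mp h).1 rfl
  have hSpos : 0 < ∑ t ∈ N, x t :=
    Finset.sum_pos (fun t _ => x_pos hp hcore hx t) ⟨w₀, hwN⟩
  set S := ∑ t ∈ N, x t with hS
  -- the zero-sum direction
  set a := fun z => if z = u then S else (0:ℝ) with ha
  set bb := fun z => if z ∈ N then x z else (0:ℝ) with hbb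
  have hd : (∑ z, (a z - bb z)) = 0 := by
    rw [Finset.sum_sub_distrib]
    have h1 : (∑ z, a z) = S := by simp [ha]
    have h2 : (∑ z, bb z) = S := by
      rw [hbb, hS]
      rw [Finset.sum_ite_mem, Finset.univ_inter]
    rw [h1, h2, sub_self]
  have hdne : (fun z => a z - bb z) ≠ 0 := by
    intro h0
    have h2 := congrFun h0 u
    simp [ha, hbb, huN] at h2
    exact hSpos.ne' h2
  have hq := PD hp hcore hx _ hd hdne
  -- expand the quadratic form
  have hMuz : ∀ z ∈ N, K.M p u z = p := fun z hz =>
    M_white K p (Ne.symm ((hmemN z).mp hz).1) ((hmemN z).mp hz).2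
  have hBab : BB K p a bb = p * S * S := by
    rw [ha, BB_ind_left]
    have : (∑ w, K.M p u w * bb w) = p * S := by
      have h1 : (∑ w, K.M p u w * bb w) = ∑ w, (if w ∈ N then K.M p u w * x w else 0) := by
        refine Finset.sum_congr rfl fun w _ => ?_
        rw [hbb]
        by_cases hw : w ∈ N <;> simp [hw]
      rw [h1, Finset.sum_ite_mem, Finset.univ_inter, hS, Finset.mul_sum]
      exact Finset.sum_congr rfl fun z hz => by rw [hMuz z hz]
    rw [this]; ring
  have hBaa : BB K p a a = p * S * S := by
    rw [ha, BB_ind_left]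
    have : (∑ w, K.M p u w * a w) = K.M p u u * S := by
      simp [ha, mul_ite, mul_zero, Finset.sum_ite_eq']
    rw [this, M_diag, hu]
    simp; ring
  have hBba : BB K p bb a = p * S * S := by rw [BB_symm]; exact hBab
  -- row identities
  have hrowu : K.g p = p * x u + p * S := by
    rw [← RR_eq_g hp hcore hx u, RR_split, M_diag, hu, if_pos rfl]
    have he : ∀ w ∈ Finset.univ.erase u, K.M p u w * x w
        = if w ∈ N then p * x w else 0 := by
      intro w hw
      have hne : w ≠ u := (Finset.mem_erase.mp hw).1
      rcases hc : K.ecolor u w with _ | _ | _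
      · rw [M_white K p (Ne.symm hne) hc, if_pos ((hmemN w).mpr ⟨hne, hc⟩)]
      · rw [M_gray K p (Ne.symm hne) hc, zero_mul,
          if_neg (fun hm => by rw [((hmemN w).mp hm).2] at hc; exact EColor.noConfusion hc)]
      · exact absurd hc (no_black hp hp2 hcore hx (Ne.symm hne))
    rw [Finset.sum_congr rfl he, Finset.sum_ite_mem]
    have hint : Finset.univ.erase u ∩ N = N := by
      ext t
      simp only [Finset.mem_inter, Finset.mem_erase, Finset.mem_univ, and_true, true_and]
      exact ⟨fun h => h.2, fun h => ⟨((hmemN t).mp h).1, h⟩⟩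
    rw [hint, hS, Finset.mul_sum]
  -- the inner-sum bound on N
  have hrow : ∀ z ∈ N, (∑ w ∈ N, K.M p z w * x w) ≤ K.g p - p * x u := by
    intro z hz
    have h2 : (∑ w ∈ insert u N, K.M p z w * x w) ≤ RR K p x z := by
      apply Finset.sum_le_sum_of_subset_of_nonneg (Finset.subset_univ _)
      intro i _ _
      exact mul_nonneg (M_nonneg K hp.1.le hp.2.le _ _) (hx.1 i)
    rw [Finset.sum_insert huN, RR_eq_g hp hcore hx z] at h2
    have h3 : K.M p z u = p := by rw [M_symm]; exact hMuz z hz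
    rw [h3] at h2
    linarith
  have hQ : BB K p bb bb ≤ S * (K.g p - p * x u) := by
    rw [hbb, BB_N]
    calc (∑ z ∈ N, ∑ w ∈ N, x z * K.M p z w * x w)
        = ∑ z ∈ N, x z * ∑ w ∈ N, K.M p z w * x w := by
          refine Finset.sum_congr rfl fun z _ => ?_
          rw [Finset.mul_sum]
          exact Finset.sum_congr rfl fun w _ => by ring
      _ ≤ ∑ z ∈ N, x z * (K.g p - p * x u) :=
          Finset.sum_le_sum fun z hz =>
            mul_le_mul_of_nonneg_left (hrow z hz) (hx.1 z)
      _ = S * (K.g p - p * x u) := by rw [← Finset.sum_mul, ← hS]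
  have hexp : BB K p (fun z => a z - bb z) (fun z => a z - bb z)
      = BB K p a a - BB K p a bb - BB K p bb a + BB K p bb bb := by
    rw [BB_sub_left, BB_sub_right, BB_sub_right]; ring
  rw [hexp, hBaa, hBab, hBba] at hq
  have hgep : K.g p - p * x u = p * S := by linarith
  rw [hgep] at hQ
  nlinarith

end Struct
section Formulas

open Finset

variable {V : Type} [Fintype V] [DecidableEq V] {p : ℝ} {K : CRG V} {x : V → ℝ}
variable [Nonempty V]

lemma white_val (hp : p ∈ Set.Ioo (0:ℝ) 1) (hp2 : p ≤ 1/2) (hcore : K.IsPCore p)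
    (hx : K.IsOptWeight p x) {v : V} (hv : K.vWhite v = true) :
    x v = K.g p / p := by
  have hg : K.g p = p * x v := by
    rw [← RR_eq_g hp hcore hx v, RR_split, M_diag, hv, if_pos rfl]
    have hz : (∑ w ∈ Finset.univ.erase v, K.M p v w * x w) = 0 := by
      apply Finset.sum_eq_zero
      intro w hw
      have hne : w ≠ v := (Finset.mem_erase.mp hw).1
      rcases hc : K.ecolor v w with _ | _ | _
      · exact absurd hc (no_white_at_white hp hp2 hcore hx hv w hne)
      · rw [M_gray K p (Ne.symm hne) hc, zero_mul]
      · exact absurd hc (no_black hp hp2 hcore hx (Ne.symm hne))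
    rw [hz, add_zero]
  rw [hg, mul_comm, mul_div_assoc, div_self hp.1.ne', mul_one]

lemma black_dG (hp : p ∈ Set.Ioo (0:ℝ) 1) (hp2 : p ≤ 1/2) (hcore : K.IsPCore p)
    (hx : K.IsOptWeight p x) {v : V} (hv : K.vWhite v = false) :
    K.dG x v = (p - K.g p) / p + ((1 - 2 * p) / p) * x v := by
  set NW := Finset.univ.filter (fun w => w ≠ v ∧ K.ecolor v w = EColor.white) with hNW
  set NG := Finset.univ.filter (fun w => w ≠ v ∧ K.ecolor v w = EColor.gray) with hNG
  have hdG : K.dG x v = ∑ w ∈ NG, x w := rfl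
  have hrow : K.g p = (1 - p) * x v + p * ∑ w ∈ NW, x w := by
    rw [← RR_eq_g hp hcore hx v, RR_split, M_diag, hv, if_neg (by simp)]
    have he : ∀ w ∈ Finset.univ.erase v, K.M p v w * x w
        = if w ∈ NW then p * x w else 0 := by
      intro w hw
      have hne : w ≠ v := (Finset.mem_erase.mp hw).1
      have hmem : w ∈ NW ↔ (w ≠ v ∧ K.ecolor v w = EColor.white) := by simp [hNW]
      rcases hc : K.ecolor v w with _ | _ | _
      · rw [M_white K p (Ne.symm hne) hc, if_pos (hmem.mpr ⟨hne, hc⟩)]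
      · rw [M_gray K p (Ne.symm hne) hc, zero_mul,
          if_neg (fun hm => by rw [(hmem.mp hm).2] at hc; exact EColor.noConfusion hc)]
      · exact absurd hc (no_black hp hp2 hcore hx (Ne.symm hne))
    rw [Finset.sum_congr rfl he, Finset.sum_ite_mem]
    have hint : Finset.univ.erase v ∩ NW = NW := by
      ext t
      simp only [Finset.mem_inter, Finset.mem_erase, Finset.mem_univ, and_true, true_and, hNW,
        Finset.mem_filter]
      tauto
    rw [hint, Finset.mul_sum]
  have hpart : x v + (∑ w ∈ NW, x w) + (∑ w ∈ NG, x w) = 1 := by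
    rw [← hx.2.1]
    have h1 : (∑ w, x w) = x v + ∑ w ∈ Finset.univ.erase v, x w :=
      (Finset.add_sum_erase _ _ (Finset.mem_univ v)).symm
    have h2 : (∑ w ∈ Finset.univ.erase v, x w)
        = (∑ w ∈ (Finset.univ.erase v).filter (fun w => K.ecolor v w = EColor.white), x w)
          + ∑ w ∈ (Finset.univ.erase v).filter (fun w => ¬(K.ecolor v w = EColor.white)), x w :=
      (Finset.sum_filter_add_sum_filter_not _ _ _).symm
    have h3 : (Finset.univ.erase v).filter (fun w => K.ecolor v w = EColor.white) = NW := by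
      ext t
      simp only [Finset.mem_filter, Finset.mem_erase, Finset.mem_univ, and_true, true_and, hNW]
    have h4 : (Finset.univ.erase v).filter (fun w => ¬(K.ecolor v w = EColor.white)) = NG := by
      ext t
      simp only [Finset.mem_filter, Finset.mem_erase, Finset.mem_univ, and_true, true_and, hNG]
      constructor
      · rintro ⟨htv, hnw⟩
        refine ⟨htv, ?_⟩
        rcases hc : K.ecolor v t with _ | _ | _
        · exact absurd hc hnw
        · rfl
        · exact absurd hc (no_black hp hp2 hcore hx (Ne.symm htv))
      · rintro ⟨htv, hg⟩
        exact ⟨htv, fun hw => by rw [hg] at hw; exact EColor.noConfusion hw⟩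
    rw [h1, h2, h3, h4]; ring
  rw [hdG]
  have hp0 : p ≠ 0 := hp.1.ne'
  field_simp
  nlinarith [hrow, hpart]

end Formulas

section Swap

open Finset

variable {V : Type} [Fintype V] [DecidableEq V]

/-- Swap white and black (vertices and edges). -/
def swapc : EColor → EColor
  | EColor.white => EColor.black
  | EColor.black => EColor.white
  | EColor.gray => EColor.gray

def CRG.swap (K : CRG V) : CRG V where
  vWhite v := !K.vWhite v
  ecolor u v := swapc (K.ecolor u v)
  ecolor_symm u v := congrArg swapc (K.ecolor_symm u v)

lemma swap_M (K : CRG V) (p : ℝ) : (K.swap).M (1 - p) = K.M p := by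
  funext u v
  unfold CRG.M CRG.swap
  by_cases h : u = v
  · rw [if_pos h, if_pos h]
    rcases hb : K.vWhite u <;> simp [hb]
  · rw [if_neg h, if_neg h]
    rcases hc : K.ecolor u v <;> simp [hc, swapc]

lemma swap_g (K : CRG V) (p : ℝ) : (K.swap).g (1 - p) = K.g p := by
  unfold CRG.g
  rw [swap_M]

lemma swap_sub (K : CRG V) (s : Finset V) : (K.sub s).swap = (K.swap).sub s := rfl

lemma swap_core {K : CRG V} {p : ℝ} (hcore : K.IsPCore p) :
    (K.swap).IsPCore (1 - p) := by
  intro s h1 h2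
  rw [swap_g, ← swap_sub, swap_g]
  exact hcore s h1 h2

lemma swap_opt {K : CRG V} {p : ℝ} {x : V → ℝ} (hx : K.IsOptWeight p x) :
    (K.swap).IsOptWeight (1 - p) x := by
  unfold CRG.IsOptWeight
  rw [swap_M, swap_g]
  exact hx

lemma swap_dG (K : CRG V) (x : V → ℝ) (v : V) : (K.swap).dG x v = K.dG x v := by
  unfold CRG.dG
  congr 1
  apply Finset.filter_congr
  intro w _
  have : (K.swap).ecolor v w = swapc (K.ecolor v w) := rfl
  rw [this]
  rcases hc : K.ecolor v w <;> simp [swapc]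

lemma swap_white {K : CRG V} {v : V} : (K.swap).vWhite v = true ↔ K.vWhite v = false := by
  show (!K.vWhite v) = true ↔ _
  simp

lemma swap_black {K : CRG V} {v : V} : (K.swap).vWhite v = false ↔ K.vWhite v = true := by
  show (!K.vWhite v) = false ↔ _
  simp

end Swap

theorem pcore_localization {V : Type} [Fintype V] [DecidableEq V] [Nonempty V]
    (p : ℝ) (hp : p ∈ Set.Ioo (0 : ℝ) 1) (K : CRG V) (hcore : K.IsPCore p)
    (x : V → ℝ) (hx : K.IsOptWeight p x) :
    (p ≤ 1 / 2 →
      (∀ v : V, K.vWhite v = true → x v = K.g p / p) ∧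
      (∀ v : V, K.vWhite v = false →
        K.dG x v = (p - K.g p) / p + ((1 - 2 * p) / p) * x v)) ∧
    (1 / 2 ≤ p →
      (∀ v : V, K.vWhite v = false → x v = K.g p / (1 - p)) ∧
      (∀ v : V, K.vWhite v = true →
        K.dG x v = (1 - p - K.g p) / (1 - p) + ((2 * p - 1) / (1 - p)) * x v)) := by
  constructor
  · intro hple
    exact ⟨fun v hv => white_val hp hple hcore hx hv,
           fun v hv => black_dG hp hple hcore hx hv⟩
  · intro hpge
    have hp' : (1 - p) ∈ Set.Ioo (0:ℝ) 1 := ⟨by linarith [hp.2], by linarith [hp.1]⟩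
    have hp2' : 1 - p ≤ 1 / 2 := by linarith
    have hcore' := swap_core hcore
    have hx' := swap_opt hx
    constructor
    · intro v hv
      have h := white_val hp' hp2' hcore' hx' (swap_white.mpr hv)
      rw [swap_g] at h
      exact h
    · intro v hv
      have h := black_dG hp' hp2' hcore' hx' (swap_black.mpr hv)
      rw [swap_dG, swap_g] at h
      rw [h]; ring
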